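/- For every valid configuration c = (z, σ, t) and every reachable tree t' ∈ D(c) with t' ≠ t*(c), one has F1(t') < F1(c); that is, t*(c) is the unique maximizer of F1 over D(c). (Corollary 1.) -/

import Mathlib

/-!
Formalization of the span-based Structure/Label transition parsing system of
Cross & Huang (2016), "Span-Based Constituency Parsing with a Structure-Label
System and Provably Optimal Dynamic Oracles".

A configuration is `(z, σ, t)` where `z` is the step number, `σ` the stack of
span boundaries and `t` the set of brackets built so far.  A bracket is a
triple `(X, i, j)` with `X` a nonterminal label and `i < j ≤ n` a span.
-/

namespace SpanParser

structure Config (N : Type*) where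
  z : ℕ
  σ : List ℕ
  t : Finset (N × ℕ × ℕ)

variable {N : Type*}

/-- The span of a bracket. -/
def span (b : N × ℕ × ℕ) : ℕ × ℕ := b.2

/-- Top (rightmost) boundary of the stack. -/
def topJ (σ : List ℕ) : ℕ := σ.getLastD 0

/-- Second-to-top boundary of the stack. -/
def topI (σ : List ℕ) : ℕ := σ.dropLast.getLastD 0

/-- Parser actions: shift, combine, label-`X`, and nolabel. -/
inductive Action (N : Type*) where
  | sh : Action N
  | comb : Action N
  | label : N → Action N
  | nolabel : Action N

variable [DecidableEq N]

/-- Applicability of an action at a configuration (for sentence length `n`). -/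
def App (n : ℕ) (c : Config N) : Action N → Prop
  | .sh      => Even c.z ∧ c.σ ≠ [] ∧ topJ c.σ < n
  | .comb    => Even c.z ∧ 3 ≤ c.σ.length
  | .label _ => Odd c.z ∧ 2 ≤ c.σ.length
  | .nolabel => Odd c.z ∧ 2 ≤ c.σ.length ∧ c.z < 4 * n - 1

/-- The result `τ(c)` of applying action `τ` to configuration `c`. -/
def doAct (c : Config N) : Action N → Config N
  | .sh      => ⟨c.z + 1, c.σ ++ [topJ c.σ + 1], c.t⟩
  | .comb    => ⟨c.z + 1, c.σ.dropLast.dropLast ++ [topJ c.σ], c.t⟩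
  | .label X => ⟨c.z + 1, c.σ, insert (X, topI c.σ, topJ c.σ) c.t⟩
  | .nolabel => ⟨c.z + 1, c.σ, c.t⟩

/-- The initial configuration `(0, [0], ∅)`. -/
def initial (N : Type*) : Config N := ⟨0, [0], ∅⟩

/-- One transition step `c ⊢ c'`. -/
def Step (n : ℕ) (c c' : Config N) : Prop := ∃ a, App n c a ∧ c' = doAct c a

/-- `⊢*`: reflexive-transitive closure of the transition relation. -/
def Reaches (n : ℕ) : Config N → Config N → Prop := Relation.ReflTransGen (Step n)

/-- A configuration is valid if it is reachable from the initial configuration. -/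
def Valid (n : ℕ) (c : Config N) : Prop := Reaches n (initial N) c

/-- A final configuration: `σ = [0, n]` and `z = 4n - 2`. -/
def Final (n : ℕ) (c : Config N) : Prop := c.σ = [0, n] ∧ c.z = 4 * n - 2

/-- `D(c)`: the set of trees of final configurations reachable from `c`. -/
def Dset (n : ℕ) (c : Config N) : Set (Finset (N × ℕ × ℕ)) :=
  {t' | ∃ c', Reaches n c c' ∧ Final n c' ∧ c'.t = t'}

/-- `(i,j) ⪯ (p,q)`: span `(i,j)` is encompassed by `(p,q)`, i.e. `p ≤ i < j ≤ q`. -/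
def Enc (s₁ s₂ : ℕ × ℕ) : Prop := s₂.1 ≤ s₁.1 ∧ s₁.1 < s₁.2 ∧ s₁.2 ≤ s₂.2

/-- `(i,j) ≺ (p,q)`: strict encompassment. -/
def SEnc (s₁ s₂ : ℕ × ℕ) : Prop := Enc s₁ s₂ ∧ s₁ ≠ s₂

/-- `tG` is a gold tree for sentence length `n`: valid spans, pairwise-distinct
spans, pairwise non-crossing spans, and exactly one bracket with span `(0, n)`
(uniqueness follows from distinctness of spans). -/
structure IsGold (n : ℕ) (tG : Finset (N × ℕ × ℕ)) : Prop where
  validSpans : ∀ b ∈ tG, (span b).1 < (span b).2 ∧ (span b).2 ≤ n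
  distinctSpans : ∀ b₁ ∈ tG, ∀ b₂ ∈ tG, span b₁ = span b₂ → b₁ = b₂
  noncrossing : ∀ b₁ ∈ tG, ∀ b₂ ∈ tG,
    Enc (span b₁) (span b₂) ∨ Enc (span b₂) (span b₁) ∨
    (span b₁).2 ≤ (span b₂).1 ∨ (span b₂).2 ≤ (span b₁).1
  root : ∃ X, (X, 0, n) ∈ tG

open Classical in
/-- `left(c)`: gold brackets (strictly, at even steps) encompassing the top
span whose left boundary occurs on the stack. -/
noncomputable def leftSet (tG : Finset (N × ℕ × ℕ)) (c : Config N) :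
    Finset (N × ℕ × ℕ) :=
  tG.filter fun b =>
    (if Even c.z then SEnc (topI c.σ, topJ c.σ) (span b)
     else Enc (topI c.σ, topJ c.σ) (span b)) ∧ (span b).1 ∈ c.σ

open Classical in
/-- `right(c)`: gold brackets entirely on the queue. -/
noncomputable def rightSet (tG : Finset (N × ℕ × ℕ)) (c : Config N) :
    Finset (N × ℕ × ℕ) :=
  tG.filter fun b => topJ c.σ ≤ (span b).1

open Classical in
/-- `reach(c)`: the reachable gold brackets (all of `t_G` at the initial
configuration, whose stack has fewer than two boundaries). -/
noncomputable def reach (tG : Finset (N × ℕ × ℕ)) (c : Config N) :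
    Finset (N × ℕ × ℕ) :=
  if c.σ.length < 2 then tG else leftSet tG c ∪ rightSet tG c

/-- The optimal tree `t*(c) = t ∪ reach(c)`. -/
noncomputable def tstar (tG : Finset (N × ℕ × ℕ)) (c : Config N) :
    Finset (N × ℕ × ℕ) :=
  c.t ∪ reach tG c

/-- `b = next(c)`: the `≺`-minimal element of `left(c)`. -/
def IsNext (tG : Finset (N × ℕ × ℕ)) (c : Config N) (b : N × ℕ × ℕ) : Prop :=
  b ∈ leftSet tG c ∧ ∀ b' ∈ leftSet tG c, Enc (span b) (span b')

/-- The dynamic-oracle policy `dyna(c)` as a predicate on actions. -/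
def Dyna (tG : Finset (N × ℕ × ℕ)) (c : Config N) (a : Action N) : Prop :=
  if c.σ.length < 2 then a = Action.sh
  else if Even c.z then
    ∃ b, IsNext tG c b ∧
      (((span b).1 = topI c.σ ∧ topJ c.σ < (span b).2 ∧ a = Action.sh) ∨
       ((span b).1 < topI c.σ ∧ (span b).2 = topJ c.σ ∧ a = Action.comb) ∨
       ((span b).1 < topI c.σ ∧ topJ c.σ < (span b).2 ∧
          (a = Action.sh ∨ a = Action.comb)))
  else
    (∃ X, (X, topI c.σ, topJ c.σ) ∈ tG ∧ a = Action.label X) ∨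
    ((∀ X, (X, topI c.σ, topJ c.σ) ∉ tG) ∧ a = Action.nolabel)

/-- `F1` of a predicted bracket set `t'` against the gold tree `tG`
(`0` when `t' ∩ tG = ∅`). -/
noncomputable def f1 (tG t' : Finset (N × ℕ × ℕ)) : ℝ :=
  if t' ∩ tG = ∅ then 0
  else
    (2 * (((t' ∩ tG).card : ℝ) / (tG.card : ℝ)) * (((t' ∩ tG).card : ℝ) / (t'.card : ℝ))) /
      ((((t' ∩ tG).card : ℝ) / (tG.card : ℝ)) + (((t' ∩ tG).card : ℝ) / (t'.card : ℝ)))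

/-- `F1(c)`: the best `F1` among trees reachable from `c`. -/
noncomputable def configF1 (n : ℕ) (tG : Finset (N × ℕ × ℕ)) (c : Config N) : ℝ :=
  sSup (f1 tG '' Dset n c)

/-- A run of (applicable) actions from one configuration to another. -/
inductive Run (n : ℕ) : Config N → List (Action N) → Config N → Prop
  | refl (c : Config N) : Run n c [] c
  | step {c c' : Config N} {as : List (Action N)} (a : Action N)
      (happ : App n c a) (h : Run n (doAct c a) as c') : Run n c (a :: as) c'

/-- A run all of whose actions follow the dynamic oracle. -/
inductive DynaRun (n : ℕ) (tG : Finset (N × ℕ × ℕ)) : Config N → Config N → Prop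
  | refl (c : Config N) : DynaRun n tG c c
  | step {c c' : Config N} (a : Action N) (happ : App n c a) (hdyna : Dyna tG c a)
      (h : DynaRun n tG (doAct c a) c') : DynaRun n tG c c'

def isSh : Action N → Bool
  | .sh => true
  | _ => false

def isComb : Action N → Bool
  | .comb => true
  | _ => false

/-- Label-step actions: `label-X` or `nolabel`. -/
def isLabelStep : Action N → Bool
  | .label _ => true
  | .nolabel => true
  | _ => false

section Proof

variable {N : Type*} [DecidableEq N]

lemma topJ_concat (l : List ℕ) (a : ℕ) : topJ (l ++ [a]) = a := by
  simp [topJ]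

lemma topI_concat (l : List ℕ) (a : ℕ) : topI (l ++ [a]) = topJ l := by
  simp [topI, topJ, List.dropLast_concat]

lemma head?_append_of_ne_nil {α : Type*} (l l' : List α) (h : l ≠ []) :
    (l ++ l').head? = l.head? := by
  cases l with
  | nil => exact absurd rfl h
  | cons a la => simp

lemma decomp1 (σ : List ℕ) (h : σ ≠ []) : σ.dropLast ++ [topJ σ] = σ := by
  have := List.dropLast_append_getLast h
  rw [topJ, List.getLastD_eq_getLast?, List.getLast?_eq_getLast h]
  exact this

lemma decomp2 (σ : List ℕ) (h : 2 ≤ σ.length) :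
    σ.dropLast.dropLast ++ [topI σ, topJ σ] = σ := by
  have h1 : σ ≠ [] := by rintro rfl; simp at h
  have h2 : σ.dropLast ≠ [] := by
    intro e
    have := σ.length_dropLast
    rw [e] at this; simp at this; omega
  have e1 : σ.dropLast.dropLast ++ [topI σ] = σ.dropLast := decomp1 σ.dropLast h2
  calc σ.dropLast.dropLast ++ [topI σ, topJ σ]
      = (σ.dropLast.dropLast ++ [topI σ]) ++ [topJ σ] := by simp
    _ = σ.dropLast ++ [topJ σ] := by rw [e1]
    _ = σ := decomp1 σ h1

/-- The invariant satisfied by all valid configurations. -/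
def Inv (n : ℕ) (c : Config N) : Prop :=
  c.σ ≠ [] ∧ c.σ.head? = some 0 ∧ c.σ.Pairwise (· < ·) ∧ topJ c.σ ≤ n ∧
  (c.z % 2 = 0 → c.z + 2 * c.σ.length = 4 * topJ c.σ + 2) ∧
  (c.z % 2 = 1 → c.z + 1 + 2 * c.σ.length = 4 * topJ c.σ + 2) ∧
  (c.z = 0 ∨ 2 ≤ c.σ.length)

section Sorted

variable {σ : List ℕ}

lemma topJ_mem (h : σ ≠ []) : topJ σ ∈ σ := by
  have hd := decomp1 σ h
  have h' : topJ σ ∈ σ.dropLast ++ [topJ σ] := by simp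
  rwa [hd] at h'

lemma topI_mem (h : 2 ≤ σ.length) : topI σ ∈ σ := by
  have hd := decomp2 σ h
  have h' : topI σ ∈ σ.dropLast.dropLast ++ [topI σ, topJ σ] := by simp
  rwa [hd] at h'

lemma mem_cases (h : 2 ≤ σ.length) {p : ℕ} (hp : p ∈ σ) :
    p ∈ σ.dropLast.dropLast ∨ p = topI σ ∨ p = topJ σ := by
  rw [← decomp2 σ h] at hp
  rcases List.mem_append.1 hp with h' | h'
  · exact Or.inl h'
  · simp at h'; tauto

lemma sorted_facts (hs : σ.Pairwise (· < ·)) (h : 2 ≤ σ.length) :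
    (∀ p ∈ σ.dropLast.dropLast, p < topI σ) ∧ topI σ < topJ σ := by
  have hd := decomp2 σ h
  generalize e1 : σ.dropLast.dropLast = l at hd ⊢
  generalize e2 : topI σ = i at hd ⊢
  generalize e3 : topJ σ = j at hd ⊢
  subst hd
  rw [List.pairwise_append] at hs
  refine ⟨fun p hp => hs.2.2 p hp i (by simp), ?_⟩
  have := hs.2.1; simp at this; exact this

lemma pairwise_dropLast2 (hs : σ.Pairwise (· < ·)) (h : 2 ≤ σ.length) :
    σ.dropLast.dropLast.Pairwise (· < ·) := by
  have hd := decomp2 σ h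
  generalize e1 : σ.dropLast.dropLast = l at hd ⊢
  generalize e2 : topI σ = i at hd
  generalize e3 : topJ σ = j at hd
  subst hd
  exact (List.pairwise_append.1 hs).1

lemma mem_le_topJ (hs : σ.Pairwise (· < ·)) {p : ℕ} (hp : p ∈ σ) (h : σ ≠ []) :
    p ≤ topJ σ := by
  by_cases h2 : 2 ≤ σ.length
  · have hf := sorted_facts hs h2
    rcases mem_cases h2 hp with h' | h' | h'
    · have := hf.1 p h'; omega
    · omega
    · omega
  · have h1 : σ.length = 1 := by
      have := List.length_pos_iff.2 h; omega
    rcases σ with _ | ⟨a, _ | _⟩ <;> simp_all [topJ]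

lemma topI_lt_topJ (hs : σ.Pairwise (· < ·)) (h : 2 ≤ σ.length) : topI σ < topJ σ :=
  (sorted_facts hs h).2

lemma mem_lt_topJ_le_topI (hs : σ.Pairwise (· < ·)) {p : ℕ} (hp : p ∈ σ)
    (h : 2 ≤ σ.length) (hlt : p < topJ σ) : p ≤ topI σ := by
  have hf := sorted_facts hs h
  rcases mem_cases h hp with h' | h' | h'
  · have := hf.1 p h'; omega
  · omega
  · omega

lemma mem_lt_topI_mem (hs : σ.Pairwise (· < ·)) {p : ℕ} (hp : p ∈ σ)
    (h : 2 ≤ σ.length) (hlt : p < topI σ) : p ∈ σ.dropLast.dropLast := by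
  have hf := sorted_facts hs h
  rcases mem_cases h hp with h' | h' | h'
  · exact h'
  · omega
  · omega

end Sorted

lemma head_zero_mem {σ : List ℕ} (h : σ.head? = some 0) : 0 ∈ σ := by
  cases σ with
  | nil => simp at h
  | cons a l => simp at h; simp [h]

lemma topI_zero_len {σ : List ℕ} (hs : σ.Pairwise (· < ·)) (h0 : σ.head? = some 0)
    (h : 2 ≤ σ.length) (hi : topI σ = 0) : σ = [0, topJ σ] := by
  have hd := decomp2 σ h
  rcases e : σ.dropLast.dropLast with _ | ⟨a, l⟩
  · conv_lhs => rw [← hd]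
    rw [e, hi]; simp
  · exfalso
    have ha : a = 0 := by
      have : σ.head? = some a := by
        rw [← hd, e]; simp
      rw [h0] at this; exact (Option.some.inj this).symm
    have := (sorted_facts hs h).1 a (by rw [e]; simp)
    omega

lemma inv_initial (n : ℕ) : Inv n (initial N) := by
  refine ⟨by simp [initial], rfl, by simp [initial], by simp [initial, topJ], ?_, ?_, ?_⟩
  · intro _; simp [initial, topJ]
  · intro h; simp [initial] at h
  · left; rfl

lemma inv_step {n : ℕ} {c : Config N} {a : Action N} (hI : Inv n c) (hA : App n c a) :
    Inv n (doAct c a) := by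
  obtain ⟨hne, h0, hs, hjn, hev, hod, hlen⟩ := hI
  have hlpos : 1 ≤ c.σ.length := List.length_pos_iff.2 hne
  cases a with
  | sh =>
    obtain ⟨hz, -, hjlt⟩ := hA
    rw [Nat.even_iff] at hz
    have hEv := hev hz
    have hj' : topJ (c.σ ++ [topJ c.σ + 1]) = topJ c.σ + 1 := topJ_concat _ _
    refine ⟨by simp [doAct], ?_, ?_, ?_, ?_, ?_, ?_⟩
    · show (c.σ ++ [topJ c.σ + 1]).head? = some 0
      rw [head?_append_of_ne_nil _ _ hne]; exact h0
    · show (c.σ ++ [topJ c.σ + 1]).Pairwise (· < ·)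
      rw [List.pairwise_append]
      refine ⟨hs, by simp, fun p hp b hb => ?_⟩
      simp at hb; subst hb
      have := mem_le_topJ hs hp hne; omega
    · show topJ (c.σ ++ [topJ c.σ + 1]) ≤ n
      rw [hj']; omega
    · intro h'; simp [doAct] at h' ⊢; omega
    · intro h'; simp [doAct] at h' ⊢; omega
    · right; simp [doAct]; omega
  | comb =>
    obtain ⟨hz, h3⟩ := hA
    rw [Nat.even_iff] at hz
    have hEv := hev hz
    have h2 : 2 ≤ c.σ.length := by omega
    have hlne : c.σ.dropLast.dropLast ≠ [] := by
      intro e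
      have h1 := c.σ.length_dropLast
      have h1' := c.σ.dropLast.length_dropLast
      rw [e] at h1'; simp at h1'; omega
    have hllen : c.σ.dropLast.dropLast.length = c.σ.length - 2 := by
      have h1 := c.σ.length_dropLast
      have h1' := c.σ.dropLast.length_dropLast
      omega
    have hf := sorted_facts hs h2
    have hj' : topJ (c.σ.dropLast.dropLast ++ [topJ c.σ]) = topJ c.σ := topJ_concat _ _
    refine ⟨by simp [doAct], ?_, ?_, ?_, ?_, ?_, ?_⟩
    · show (c.σ.dropLast.dropLast ++ [topJ c.σ]).head? = some 0
      rw [head?_append_of_ne_nil _ _ hlne]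
      rw [← decomp2 c.σ h2] at h0
      rw [head?_append_of_ne_nil _ _ hlne] at h0; exact h0
    · show (c.σ.dropLast.dropLast ++ [topJ c.σ]).Pairwise (· < ·)
      rw [List.pairwise_append]
      refine ⟨pairwise_dropLast2 hs h2, by simp, fun p hp b hb => ?_⟩
      simp at hb; subst hb
      have := hf.1 p hp; omega
    · show topJ (c.σ.dropLast.dropLast ++ [topJ c.σ]) ≤ n
      rw [hj']; omega
    · intro h'; simp [doAct] at h' ⊢; omega
    · intro h'; simp [doAct] at h' ⊢; omega
    · right; simp [doAct, hllen]; omega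
  | label X =>
    obtain ⟨hz, h2⟩ := hA
    rw [Nat.odd_iff] at hz
    have hOd := hod hz
    exact ⟨hne, h0, hs, hjn, fun h' => by simp [doAct] at h' ⊢; omega,
      fun h' => by simp [doAct] at h' ⊢; omega, Or.inr h2⟩
  | nolabel =>
    obtain ⟨hz, h2, -⟩ := hA
    rw [Nat.odd_iff] at hz
    have hOd := hod hz
    exact ⟨hne, h0, hs, hjn, fun h' => by simp [doAct] at h' ⊢; omega,
      fun h' => by simp [doAct] at h' ⊢; omega, Or.inr h2⟩

lemma inv_reaches {n : ℕ} {c c' : Config N} (h : Reaches n c c') (hI : Inv n c) :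
    Inv n c' := by
  induction h with
  | refl => exact hI
  | tail _ hstep ih =>
    obtain ⟨a, hA, rfl⟩ := hstep
    exact inv_step ih hA

lemma valid_inv {n : ℕ} {c : Config N} (hc : Valid n c) : Inv n c :=
  inv_reaches hc (inv_initial n)

end Proof
section Proof2

variable {N : Type*} [DecidableEq N]

lemma mem_leftSet {tG : Finset (N × ℕ × ℕ)} {c : Config N} {b : N × ℕ × ℕ} :
    b ∈ leftSet tG c ↔ b ∈ tG ∧
      (if Even c.z then SEnc (topI c.σ, topJ c.σ) (span b)
       else Enc (topI c.σ, topJ c.σ) (span b)) ∧ (span b).1 ∈ c.σ := by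
  classical
  rw [leftSet]
  simp [Finset.mem_filter]

lemma mem_rightSet {tG : Finset (N × ℕ × ℕ)} {c : Config N} {b : N × ℕ × ℕ} :
    b ∈ rightSet tG c ↔ b ∈ tG ∧ topJ c.σ ≤ (span b).1 := by
  classical
  rw [rightSet]
  simp [Finset.mem_filter]

lemma leftSet_subset (tG : Finset (N × ℕ × ℕ)) (c : Config N) : leftSet tG c ⊆ tG :=
  fun _ hb => (mem_leftSet.1 hb).1

lemma rightSet_subset (tG : Finset (N × ℕ × ℕ)) (c : Config N) : rightSet tG c ⊆ tG :=
  fun _ hb => (mem_rightSet.1 hb).1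

lemma reach_subset (tG : Finset (N × ℕ × ℕ)) (c : Config N) : reach tG c ⊆ tG := by
  rw [reach]
  split
  · exact fun _ h => h
  · exact Finset.union_subset (leftSet_subset tG c) (rightSet_subset tG c)

lemma reach_of_len {tG : Finset (N × ℕ × ℕ)} {c : Config N} (h : 2 ≤ c.σ.length) :
    reach tG c = leftSet tG c ∪ rightSet tG c := by
  rw [reach, if_neg (by omega)]

/-- The gold hits of the optimal tree. -/
noncomputable def Sset (tG : Finset (N × ℕ × ℕ)) (c : Config N) :
    Finset (N × ℕ × ℕ) :=
  (c.t ∩ tG) ∪ reach tG c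

lemma Sset_eq_tstar_inter (tG : Finset (N × ℕ × ℕ)) (c : Config N) :
    Sset tG c = tstar tG c ∩ tG := by
  rw [Sset, tstar, Finset.union_inter_distrib_right,
    Finset.inter_eq_left.2 (reach_subset tG c)]

lemma Sset_step {n : ℕ} {tG : Finset (N × ℕ × ℕ)} (hG : IsGold n tG)
    {c : Config N} {a : Action N} (hI : Inv n c) (hA : App n c a) :
    Sset tG (doAct c a) ⊆ Sset tG c := by
  obtain ⟨hne, h0, hs, hjn, hev, hod, hlen⟩ := hI
  by_cases hlen2 : c.σ.length < 2
  · have hr : reach tG c = tG := by rw [reach, if_pos hlen2]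
    intro b hb
    rw [Sset, hr, Finset.mem_union]
    right
    rcases Finset.mem_union.1 hb with h | h
    · exact (Finset.mem_inter.1 h).2
    · exact reach_subset _ _ h
  push_neg at hlen2
  have hij := topI_lt_topJ hs hlen2
  cases a with
  | sh =>
    obtain ⟨hz, -, hjlt⟩ := hA
    have hz' : ¬ Even (c.z + 1) := by
      rw [Nat.even_iff] at hz ⊢; omega
    intro b hb
    rw [Sset, Finset.mem_union] at hb ⊢
    rcases hb with h | h
    · exact Or.inl (by simpa [doAct] using h)
    · right
      rw [reach_of_len hlen2]
      rw [reach_of_len (c := doAct c Action.sh) (by simp [doAct]; omega)] at h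
      have hj' : topJ (doAct c Action.sh).σ = topJ c.σ + 1 := topJ_concat _ _
      have hi' : topI (doAct c Action.sh).σ = topJ c.σ := topI_concat _ _
      rcases Finset.mem_union.1 h with h | h
      · -- left of shifted config
        obtain ⟨hbG, hEnc, hmem⟩ := mem_leftSet.1 h
        rw [if_neg (by simpa [doAct] using hz'), hi', hj'] at hEnc
        obtain ⟨hp, -, hq⟩ := hEnc
        simp only [doAct] at hmem
        have hpmem : (span b).1 ∈ c.σ := by
          rcases List.mem_append.1 hmem with h' | h'
          · exact h'
          · simp at h'; omega
        by_cases hcase : (span b).1 = topJ c.σ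
        · exact Finset.mem_union_right _ (mem_rightSet.2 ⟨hbG, by omega⟩)
        · have hple : (span b).1 ≤ topI c.σ :=
            mem_lt_topJ_le_topI hs hpmem hlen2 (by omega)
          refine Finset.mem_union_left _ (mem_leftSet.2 ⟨hbG, ?_, hpmem⟩)
          rw [if_pos hz]
          refine ⟨⟨hple, hij, by omega⟩, ?_⟩
          intro he
          have : (span b).2 = topJ c.σ := by rw [← he]
          omega
      · obtain ⟨hbG, hle⟩ := mem_rightSet.1 h
        rw [hj'] at hle
        exact Finset.mem_union_right _ (mem_rightSet.2 ⟨hbG, by omega⟩)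
  | comb =>
    obtain ⟨hz, h3⟩ := hA
    have hz' : ¬ Even (c.z + 1) := by
      rw [Nat.even_iff] at hz ⊢; omega
    have hlne : c.σ.dropLast.dropLast ≠ [] := by
      intro e
      have h1 := c.σ.length_dropLast
      have h1' := c.σ.dropLast.length_dropLast
      rw [e] at h1'; simp at h1'; omega
    have hllen : c.σ.dropLast.dropLast.length = c.σ.length - 2 := by
      have h1 := c.σ.length_dropLast
      have h1' := c.σ.dropLast.length_dropLast
      omega
    have hf := sorted_facts hs hlen2
    have hh : topJ c.σ.dropLast.dropLast < topI c.σ :=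
      hf.1 _ (topJ_mem hlne)
    intro b hb
    rw [Sset, Finset.mem_union] at hb ⊢
    rcases hb with h | h
    · exact Or.inl (by simpa [doAct] using h)
    · right
      rw [reach_of_len hlen2]
      rw [reach_of_len (c := doAct c Action.comb) (by simp [doAct, hllen]; omega)] at h
      have hj' : topJ (doAct c Action.comb).σ = topJ c.σ := topJ_concat _ _
      have hi' : topI (doAct c Action.comb).σ = topJ c.σ.dropLast.dropLast :=
        topI_concat _ _
      rcases Finset.mem_union.1 h with h | h
      · obtain ⟨hbG, hEnc, hmem⟩ := mem_leftSet.1 h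
        rw [if_neg (by simpa [doAct] using hz'), hi', hj'] at hEnc
        obtain ⟨hp, -, hq⟩ := hEnc
        simp only [doAct] at hmem
        have hpmem : (span b).1 ∈ c.σ := by
          rcases List.mem_append.1 hmem with h' | h'
          · exact List.dropLast_subset _ (List.dropLast_subset _ h')
          · simp at h'; omega
        refine Finset.mem_union_left _ (mem_leftSet.2 ⟨hbG, ?_, hpmem⟩)
        rw [if_pos hz]
        refine ⟨⟨by omega, hij, hq⟩, ?_⟩
        intro he
        have : (span b).1 = topI c.σ := by rw [← he]
        omega
      · obtain ⟨hbG, hle⟩ := mem_rightSet.1 h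
        rw [hj'] at hle
        exact Finset.mem_union_right _ (mem_rightSet.2 ⟨hbG, hle⟩)
  | label X =>
    obtain ⟨hz, h2⟩ := hA
    rw [Nat.odd_iff] at hz
    have hzE : ¬ Even c.z := by rw [Nat.even_iff]; omega
    have hz' : Even (c.z + 1) := by rw [Nat.even_iff]; omega
    intro b hb
    rw [Sset, Finset.mem_union] at hb ⊢
    rcases hb with h | h
    · obtain ⟨hbt, hbG⟩ := Finset.mem_inter.1 h
      simp only [doAct, Finset.mem_insert] at hbt
      rcases hbt with rfl | hbt
      · -- the newly labelled bracket is in left(c)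
        right
        rw [reach_of_len hlen2]
        refine Finset.mem_union_left _ (mem_leftSet.2 ⟨hbG, ?_, ?_⟩)
        · rw [if_neg hzE]
          exact ⟨le_refl _, hij, le_refl _⟩
        · exact topI_mem hlen2
      · exact Or.inl (Finset.mem_inter.2 ⟨hbt, hbG⟩)
    · right
      rw [reach_of_len hlen2]
      rw [reach_of_len (c := doAct c (Action.label X)) (by simpa [doAct] using hlen2)] at h
      rcases Finset.mem_union.1 h with h | h
      · obtain ⟨hbG, hEnc, hmem⟩ := mem_leftSet.1 h
        rw [if_pos (by simpa [doAct] using hz')] at hEnc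
        simp only [doAct] at hmem
        refine Finset.mem_union_left _ (mem_leftSet.2 ⟨hbG, ?_, hmem⟩)
        rw [if_neg hzE]
        exact hEnc.1
      · obtain ⟨hbG, hle⟩ := mem_rightSet.1 h
        exact Finset.mem_union_right _ (mem_rightSet.2 ⟨hbG, hle⟩)
  | nolabel =>
    obtain ⟨hz, h2, -⟩ := hA
    rw [Nat.odd_iff] at hz
    have hzE : ¬ Even c.z := by rw [Nat.even_iff]; omega
    have hz' : Even (c.z + 1) := by rw [Nat.even_iff]; omega
    intro b hb
    rw [Sset, Finset.mem_union] at hb ⊢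
    rcases hb with h | h
    · exact Or.inl (by simpa [doAct] using h)
    · right
      rw [reach_of_len hlen2]
      rw [reach_of_len (c := doAct c Action.nolabel) (by simpa [doAct] using hlen2)] at h
      rcases Finset.mem_union.1 h with h | h
      · obtain ⟨hbG, hEnc, hmem⟩ := mem_leftSet.1 h
        rw [if_pos (by simpa [doAct] using hz')] at hEnc
        simp only [doAct] at hmem
        refine Finset.mem_union_left _ (mem_leftSet.2 ⟨hbG, ?_, hmem⟩)
        rw [if_neg hzE]
        exact hEnc.1
      · obtain ⟨hbG, hle⟩ := mem_rightSet.1 h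
        exact Finset.mem_union_right _ (mem_rightSet.2 ⟨hbG, hle⟩)

lemma Sset_reaches {n : ℕ} {tG : Finset (N × ℕ × ℕ)} (hG : IsGold n tG)
    {c c' : Config N} (h : Reaches n c c') (hI : Inv n c) :
    Sset tG c' ⊆ Sset tG c ∧ c.t ⊆ c'.t := by
  induction h with
  | refl => exact ⟨Finset.Subset.refl _, Finset.Subset.refl _⟩
  | tail hr hstep ih =>
    obtain ⟨a, hA, rfl⟩ := hstep
    have hI' := inv_reaches hr hI
    obtain ⟨ih1, ih2⟩ := ih
    refine ⟨(Sset_step hG hI' hA).trans ih1, ih2.trans ?_⟩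
    cases a <;> simp [doAct] 

end Proof2
section Proof3

variable {N : Type*} [DecidableEq N]

lemma topJ_pair (a b : ℕ) : topJ [a, b] = b := rfl
lemma topI_pair (a b : ℕ) : topI [a, b] = a := rfl

lemma reach_final {n : ℕ} (hn : 1 ≤ n) {tG : Finset (N × ℕ × ℕ)} (hG : IsGold n tG)
    {c : Config N} (hF : Final n c) : reach tG c = ∅ := by
  obtain ⟨hσ, hz⟩ := hF
  have hlen : ¬ c.σ.length < 2 := by rw [hσ]; simp
  have hEv : Even c.z := by rw [hz, Nat.even_iff]; omega
  have hi : topI c.σ = 0 := by rw [hσ]; rfl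
  have hj : topJ c.σ = n := by rw [hσ]; rfl
  rw [reach, if_neg hlen, Finset.eq_empty_iff_forall_notMem]
  intro b hb
  rcases Finset.mem_union.1 hb with h | h
  · obtain ⟨hbG, hEnc, -⟩ := mem_leftSet.1 h
    rw [if_pos hEv, hi, hj] at hEnc
    obtain ⟨⟨hp, hij0, hq⟩, hneq⟩ := hEnc
    have hv := hG.validSpans b hbG
    exact hneq (Prod.ext_iff.2 ⟨by omega, by omega⟩)
  · obtain ⟨hbG, hle⟩ := mem_rightSet.1 h
    have hv := hG.validSpans b hbG
    rw [hj] at hle; omega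

lemma final_not_app {n : ℕ} {c : Config N} (hF : Final n c)
    {a : Action N} (hA : App n c a) : False := by
  obtain ⟨hσ, hz⟩ := hF
  have hEv : ¬ Odd c.z := by
    rw [Nat.odd_iff, hz]; omega
  cases a with
  | sh =>
    obtain ⟨-, -, hlt⟩ := hA
    rw [hσ, topJ_pair] at hlt; omega
  | comb =>
    obtain ⟨-, h3⟩ := hA
    rw [hσ] at h3; simp at h3
  | label X => exact hEv hA.1
  | nolabel => exact hEv hA.1

lemma reaches_final_eq {n : ℕ} {c c' : Config N} (hF : Final n c)
    (h : Reaches n c c') : c' = c := by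
  induction h with
  | refl => rfl
  | tail hr hstep ih =>
    subst ih
    obtain ⟨a, hA, rfl⟩ := hstep
    exact absurd hA (fun hA => final_not_app hF hA)

lemma root_mem_left {n : ℕ} {tG : Finset (N × ℕ × ℕ)} {c : Config N}
    (hI : Inv n c) (hnf : ¬ Final n c) (h2 : 2 ≤ c.σ.length) {X : N}
    (hX : (X, 0, n) ∈ tG) : (X, 0, n) ∈ leftSet tG c := by
  obtain ⟨hne, h0, hs, hjn, hev, hod, hlen⟩ := hI
  have hij := topI_lt_topJ hs h2
  refine mem_leftSet.2 ⟨hX, ?_, head_zero_mem h0⟩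
  have hEnc : Enc (topI c.σ, topJ c.σ) (span (X, 0, n)) := ⟨Nat.zero_le _, hij, hjn⟩
  by_cases hEv : Even c.z
  · rw [if_pos hEv]
    refine ⟨hEnc, fun he => hnf ?_⟩
    have hi0 : topI c.σ = 0 := congrArg Prod.fst he
    have hjn' : topJ c.σ = n := congrArg Prod.snd he
    have hσ := topI_zero_len hs h0 h2 hi0
    have hl2 : c.σ.length = 2 := by rw [hσ]; rfl
    have hEq := hev (Nat.even_iff.1 hEv)
    exact ⟨by rw [hσ, hjn'], by omega⟩
  · rw [if_neg hEv]; exact hEnc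

lemma root_mem_reach {n : ℕ} {tG : Finset (N × ℕ × ℕ)} {c : Config N}
    (hI : Inv n c) (hnf : ¬ Final n c) {X : N}
    (hX : (X, 0, n) ∈ tG) : (X, 0, n) ∈ reach tG c := by
  by_cases h2 : c.σ.length < 2
  · rw [reach, if_pos h2]; exact hX
  · rw [reach_of_len (by omega)]
    exact Finset.mem_union_left _ (root_mem_left hI hnf (by omega) hX)

lemma leftSet_enc {tG : Finset (N × ℕ × ℕ)} {c : Config N} {b : N × ℕ × ℕ}
    (hb : b ∈ leftSet tG c) : Enc (topI c.σ, topJ c.σ) (span b) := by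
  obtain ⟨-, hEnc, -⟩ := mem_leftSet.1 hb
  by_cases hEv : Even c.z
  · rw [if_pos hEv] at hEnc; exact hEnc.1
  · rw [if_neg hEv] at hEnc; exact hEnc

lemma exists_isNext {n : ℕ} {tG : Finset (N × ℕ × ℕ)} (hG : IsGold n tG)
    {c : Config N} (hne : (leftSet tG c).Nonempty) :
    ∃ b, IsNext tG c b := by
  obtain ⟨b, hb, hmin⟩ := Finset.exists_min_image (leftSet tG c)
    (fun b => (span b).2 - (span b).1) hne
  refine ⟨b, hb, fun b' hb' => ?_⟩
  obtain ⟨hp1, hij1, hq1⟩ := leftSet_enc hb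
  obtain ⟨hp2, hij2, hq2⟩ := leftSet_enc hb'
  have hw := hmin b' hb'
  rcases hG.noncrossing b (leftSet_subset _ _ hb) b' (leftSet_subset _ _ hb') with
    h | h | h | h
  · exact h
  · obtain ⟨ha, hb'', hc⟩ := h
    exact ⟨by omega, by omega, by omega⟩
  · exact absurd h (by omega)
  · exact absurd h (by omega)

end Proof3
section Proof4

variable {N : Type*} [DecidableEq N]

lemma tstar_step_subset {n : ℕ} {tG : Finset (N × ℕ × ℕ)} (hG : IsGold n tG)
    {c : Config N} {a : Action N} (hI : Inv n c) (hA : App n c a)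
    (hlab : ∀ X, a = Action.label X → (X, topI c.σ, topJ c.σ) ∈ tG) :
    tstar tG (doAct c a) ⊆ tstar tG c := by
  have hS := Sset_step hG hI hA
  have hS' : Sset tG c ⊆ tstar tG c := by
    rw [Sset_eq_tstar_inter]; exact Finset.inter_subset_left
  intro b hb
  rcases Finset.mem_union.1 hb with h | h
  · -- b ∈ (doAct c a).t
    cases a with
    | sh => exact Finset.mem_union_left _ (by simpa [doAct] using h)
    | comb => exact Finset.mem_union_left _ (by simpa [doAct] using h)
    | nolabel => exact Finset.mem_union_left _ (by simpa [doAct] using h)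
    | label X =>
      simp only [doAct, Finset.mem_insert] at h
      rcases h with rfl | h
      · have hbG := hlab X rfl
        exact hS' (hS (Finset.mem_union_left _
          (Finset.mem_inter.2 ⟨by simp [doAct], hbG⟩)))
      · exact Finset.mem_union_left _ h
  · exact hS' (hS (Finset.mem_union_right _ h))

lemma oracle_step {n : ℕ} (hn : 1 ≤ n) {tG : Finset (N × ℕ × ℕ)} (hG : IsGold n tG)
    {c : Config N} (hI : Inv n c) (hnf : ¬ Final n c) :
    ∃ a, App n c a ∧ tstar tG (doAct c a) = tstar tG c := by
  obtain ⟨hne, h0, hs, hjn, hev, hod, hlen⟩ := hI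
  have hI' : Inv n c := ⟨hne, h0, hs, hjn, hev, hod, hlen⟩
  obtain ⟨Xr, hXr⟩ := hG.root
  by_cases h2 : c.σ.length < 2
  · -- σ = [0], z = 0 : shift
    have hl1 : c.σ.length = 1 := by
      have := List.length_pos_iff.2 hne; omega
    have hσ : c.σ = [0] := by
      rcases e : c.σ with _ | ⟨x, l⟩
      · rw [e] at hl1; simp at hl1
      · rw [e] at hl1 h0
        simp at hl1 h0
        rw [hl1]; rw [h0]
    have hz0 : c.z = 0 := by rcases hlen with h | h; exact h; omega
    have hj0 : topJ c.σ = 0 := by rw [hσ]; rfl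
    refine ⟨Action.sh, ⟨by rw [hz0]; exact Even.zero, hne, by omega⟩, ?_⟩
    have hστ : (doAct c Action.sh).σ = [0, 1] := by
      simp only [doAct]; rw [hσ]; rfl
    have hreachc : reach tG c = tG := by rw [reach, if_pos h2]
    have hreachτ : reach tG (doAct c Action.sh) = tG := by
      rw [reach_of_len (by rw [hστ]; simp)]
      refine Finset.Subset.antisymm
        (Finset.union_subset (leftSet_subset _ _) (rightSet_subset _ _)) ?_
      intro b hb
      have hv := hG.validSpans b hb
      by_cases hp : (span b).1 = 0
      · refine Finset.mem_union_left _ (mem_leftSet.2 ⟨hb, ?_, ?_⟩)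
        · rw [if_neg (by simp [doAct, hz0]), hστ, topI_pair, topJ_pair]
          exact ⟨by omega, by omega, by omega⟩
        · rw [hστ, hp]; simp
      · exact Finset.mem_union_right _ (mem_rightSet.2 ⟨hb, by
          rw [hστ, topJ_pair]; omega⟩)
    rw [tstar, tstar, hreachc, hreachτ]
    simp [doAct]
  · push_neg at h2
    have hij := topI_lt_topJ hs h2
    by_cases hEv : Even c.z
    · -- structural step
      have hroot : (Xr, 0, n) ∈ leftSet tG c := root_mem_left hI' hnf h2 hXr
      obtain ⟨b, hbL, hmin⟩ := exists_isNext hG ⟨_, hroot⟩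
      obtain ⟨hbG, hEnc, hpσ⟩ := mem_leftSet.1 hbL
      rw [if_pos hEv] at hEnc
      obtain ⟨⟨hp, -, hq⟩, hneq⟩ := hEnc
      have hv := hG.validSpans b hbG
      by_cases hpi : (span b).1 = topI c.σ
      · -- next starts at i : shift
        have hqj : topJ c.σ < (span b).2 := by
          rcases Nat.lt_or_ge (topJ c.σ) (span b).2 with h | h
          · exact h
          · exact absurd (Prod.ext_iff.2 ⟨hpi.symm, by omega⟩) hneq
        have hA : App n c Action.sh := ⟨hEv, hne, by omega⟩
        refine ⟨Action.sh, hA, Finset.Subset.antisymm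
          (tstar_step_subset hG hI' hA (by simp)) ?_⟩
        have hj' : topJ (doAct c Action.sh).σ = topJ c.σ + 1 := topJ_concat _ _
        have hi' : topI (doAct c Action.sh).σ = topJ c.σ := topI_concat _ _
        have hzτ : ¬ Even (doAct c Action.sh).z := by
          simp only [doAct]; rw [Nat.even_iff] at hEv ⊢; omega
        have hlτ : 2 ≤ (doAct c Action.sh).σ.length := by simp [doAct]; omega
        intro b' hb'
        rw [tstar, reach_of_len hlτ]
        rcases Finset.mem_union.1 hb' with h | h
        · exact Finset.mem_union_left _ (by simpa [doAct] using h)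
        · rw [reach_of_len h2] at h
          rcases Finset.mem_union.1 h with h | h
          · -- left c ⊆ left τ
            obtain ⟨hb'G, hEnc', hp'σ⟩ := mem_leftSet.1 h
            rw [if_pos hEv] at hEnc'
            obtain ⟨⟨hp', -, hq'⟩, -⟩ := hEnc'
            have hm := hmin _ h
            obtain ⟨hw1, -, hw2⟩ := hm
            refine Finset.mem_union_right _ (Finset.mem_union_left _
              (mem_leftSet.2 ⟨hb'G, ?_, ?_⟩))
            · rw [if_neg hzτ, hi', hj']
              exact ⟨by omega, by omega, by omega⟩
            · simp only [doAct]
              exact List.mem_append_left _ hp'σ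
          · obtain ⟨hb'G, hle⟩ := mem_rightSet.1 h
            have hv' := hG.validSpans b' hb'G
            by_cases hpj : (span b').1 = topJ c.σ
            · refine Finset.mem_union_right _ (Finset.mem_union_left _
                (mem_leftSet.2 ⟨hb'G, ?_, ?_⟩))
              · rw [if_neg hzτ, hi', hj']
                exact ⟨by omega, by omega, by omega⟩
              · simp only [doAct]
                exact List.mem_append_left _ (by rw [hpj]; exact topJ_mem hne)
            · refine Finset.mem_union_right _ (Finset.mem_union_right _
                (mem_rightSet.2 ⟨hb'G, by rw [hj']; omega⟩))
      · -- next starts left of i : combine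
        have hpi' : (span b).1 < topI c.σ := by omega
        have hpD : (span b).1 ∈ c.σ.dropLast.dropLast := mem_lt_topI_mem hs hpσ h2 hpi'
        have hlne : c.σ.dropLast.dropLast ≠ [] := by
          intro e; rw [e] at hpD; simp at hpD
        have hllen : c.σ.dropLast.dropLast.length = c.σ.length - 2 := by
          have h1 := c.σ.length_dropLast
          have h1' := c.σ.dropLast.length_dropLast
          omega
        have h3 : 3 ≤ c.σ.length := by
          have := List.length_pos_iff.2 hlne; omega
        have hA : App n c Action.comb := ⟨hEv, h3⟩
        have hsD := pairwise_dropLast2 hs h2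
        have hhD : (span b).1 ≤ topJ c.σ.dropLast.dropLast :=
          mem_le_topJ hsD hpD hlne
        have hhi : topJ c.σ.dropLast.dropLast < topI c.σ :=
          (sorted_facts hs h2).1 _ (topJ_mem hlne)
        refine ⟨Action.comb, hA, Finset.Subset.antisymm
          (tstar_step_subset hG hI' hA (by simp)) ?_⟩
        have hj' : topJ (doAct c Action.comb).σ = topJ c.σ := topJ_concat _ _
        have hi' : topI (doAct c Action.comb).σ = topJ c.σ.dropLast.dropLast :=
          topI_concat _ _
        have hzτ : ¬ Even (doAct c Action.comb).z := by
          simp only [doAct]; rw [Nat.even_iff] at hEv ⊢; omega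
        have hlτ : 2 ≤ (doAct c Action.comb).σ.length := by
          simp [doAct, hllen]; omega
        intro b' hb'
        rw [tstar, reach_of_len hlτ]
        rcases Finset.mem_union.1 hb' with h | h
        · exact Finset.mem_union_left _ (by simpa [doAct] using h)
        · rw [reach_of_len h2] at h
          rcases Finset.mem_union.1 h with h | h
          · obtain ⟨hb'G, hEnc', hp'σ⟩ := mem_leftSet.1 h
            rw [if_pos hEv] at hEnc'
            obtain ⟨⟨hp', -, hq'⟩, -⟩ := hEnc'
            have hm := hmin _ h
            obtain ⟨hw1, -, hw2⟩ := hm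
            refine Finset.mem_union_right _ (Finset.mem_union_left _
              (mem_leftSet.2 ⟨hb'G, ?_, ?_⟩))
            · rw [if_neg hzτ, hi', hj']
              exact ⟨by omega, by omega, by omega⟩
            · simp only [doAct]
              exact List.mem_append_left _
                (mem_lt_topI_mem hs hp'σ h2 (by omega))
          · obtain ⟨hb'G, hle⟩ := mem_rightSet.1 h
            exact Finset.mem_union_right _ (Finset.mem_union_right _
              (mem_rightSet.2 ⟨hb'G, by rw [hj']; omega⟩))
    · -- label step
      have hOd : Odd c.z := Nat.not_even_iff_odd.1 hEv
      have hzτE : Even (c.z + 1) := by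
        rw [Nat.odd_iff] at hOd; rw [Nat.even_iff]; omega
      by_cases hX : ∃ X, (X, topI c.σ, topJ c.σ) ∈ tG
      · obtain ⟨X, hXm⟩ := hX
        have hA : App n c (Action.label X) := ⟨hOd, h2⟩
        refine ⟨Action.label X, hA, Finset.Subset.antisymm
          (tstar_step_subset hG hI' hA (fun Y hY => by
            injection hY with hY; rw [← hY]; exact hXm)) ?_⟩
        intro b' hb'
        rw [tstar, reach_of_len (by simpa [doAct] using h2)]
        have hzτ : Even (doAct c (Action.label X)).z := by simpa [doAct] using hzτE
        rcases Finset.mem_union.1 hb' with h | h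
        · exact Finset.mem_union_left _ (by simp [doAct]; right; exact h)
        · rw [reach_of_len h2] at h
          rcases Finset.mem_union.1 h with h | h
          · obtain ⟨hb'G, hEnc', hp'σ⟩ := mem_leftSet.1 h
            rw [if_neg hEv] at hEnc'
            by_cases hsp : span b' = (topI c.σ, topJ c.σ)
            · -- b' is the bracket being labelled
              have : b' = (X, topI c.σ, topJ c.σ) :=
                hG.distinctSpans b' hb'G _ hXm (by rw [hsp]; rfl)
              refine Finset.mem_union_left _ ?_
              rw [this]; simp [doAct]
            · refine Finset.mem_union_right _ (Finset.mem_union_left _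
                (mem_leftSet.2 ⟨hb'G, ?_, by simpa [doAct] using hp'σ⟩))
              rw [if_pos hzτ]
              have hi' : topI (doAct c (Action.label X)).σ = topI c.σ := rfl
              have hj' : topJ (doAct c (Action.label X)).σ = topJ c.σ := rfl
              rw [hi', hj']
              exact ⟨hEnc', fun he => hsp (by rw [← he])⟩
          · obtain ⟨hb'G, hle⟩ := mem_rightSet.1 h
            exact Finset.mem_union_right _ (Finset.mem_union_right _
              (mem_rightSet.2 ⟨hb'G, hle⟩))
      · push_neg at hX
        have hz4 : c.z < 4 * n - 1 := by
          rw [Nat.odd_iff] at hOd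
          have := hod hOd
          omega
        have hA : App n c Action.nolabel := ⟨hOd, h2, hz4⟩
        refine ⟨Action.nolabel, hA, Finset.Subset.antisymm
          (tstar_step_subset hG hI' hA (by simp)) ?_⟩
        intro b' hb'
        rw [tstar, reach_of_len (by simpa [doAct] using h2)]
        have hzτ : Even (doAct c Action.nolabel).z := by simpa [doAct] using hzτE
        rcases Finset.mem_union.1 hb' with h | h
        · exact Finset.mem_union_left _ (by simpa [doAct] using h)
        · rw [reach_of_len h2] at h
          rcases Finset.mem_union.1 h with h | h
          · obtain ⟨hb'G, hEnc', hp'σ⟩ := mem_leftSet.1 h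
            rw [if_neg hEv] at hEnc'
            have hsp : span b' ≠ (topI c.σ, topJ c.σ) := by
              intro hsp
              have : b' = (b'.1, topI c.σ, topJ c.σ) := by
                rw [← hsp]; rfl
              exact hX b'.1 (by rw [← this]; exact hb'G)
            refine Finset.mem_union_right _ (Finset.mem_union_left _
              (mem_leftSet.2 ⟨hb'G, ?_, by simpa [doAct] using hp'σ⟩))
            rw [if_pos hzτ]
            have hi' : topI (doAct c Action.nolabel).σ = topI c.σ := rfl
            have hj' : topJ (doAct c Action.nolabel).σ = topJ c.σ := rfl
            rw [hi', hj']
            exact ⟨hEnc', fun he => hsp (by rw [← he])⟩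
          · obtain ⟨hb'G, hle⟩ := mem_rightSet.1 h
            exact Finset.mem_union_right _ (Finset.mem_union_right _
              (mem_rightSet.2 ⟨hb'G, hle⟩))

end Proof4
section Proof5

variable {N : Type*} [DecidableEq N]

lemma doAct_z (c : Config N) (a : Action N) : (doAct c a).z = c.z + 1 := by
  cases a <;> rfl

lemma len2_eq {σ : List ℕ} (h0 : σ.head? = some 0) (h : σ.length = 2) :
    σ = [0, topJ σ] := by
  rcases σ with _ | ⟨a, _ | ⟨b, _ | ⟨x, l⟩⟩⟩ <;> simp_all [topJ]

lemma final_of_big_z {n : ℕ} (hn : 1 ≤ n) {c : Config N} (hI : Inv n c)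
    (hz : 4 * n - 2 ≤ c.z) : Final n c := by
  obtain ⟨hne, h0, hs, hjn, hev, hod, hlen⟩ := hI
  have hlpos : 1 ≤ c.σ.length := List.length_pos_iff.2 hne
  rcases Nat.even_or_odd c.z with hEv | hOd
  · have hEq := hev (Nat.even_iff.1 hEv)
    have hl2 : c.σ.length = 2 := by omega
    have hj : topJ c.σ = n := by omega
    have hσ := len2_eq h0 hl2
    exact ⟨by rw [hσ, hj], by omega⟩
  · have hEq := hod (Nat.odd_iff.1 hOd)
    exfalso
    have : c.z ≠ 0 := by rw [Nat.odd_iff] at hOd; omega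
    omega

lemma oracle_run {n : ℕ} (hn : 1 ≤ n) {tG : Finset (N × ℕ × ℕ)} (hG : IsGold n tG) :
    ∀ (k : ℕ) (c : Config N), 4 * n - 2 - c.z ≤ k → Inv n c →
      ∃ c', Reaches n c c' ∧ Final n c' ∧ c'.t = tstar tG c := by
  intro k
  induction k with
  | zero =>
    intro c hk hI
    have hF : Final n c := final_of_big_z hn hI (by omega)
    exact ⟨c, Relation.ReflTransGen.refl, hF, by
      rw [tstar, reach_final hn hG hF]; simp⟩
  | succ k ih =>
    intro c hk hI
    by_cases hF : Final n c
    · exact ⟨c, Relation.ReflTransGen.refl, hF, by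
        rw [tstar, reach_final hn hG hF]; simp⟩
    · obtain ⟨a, hA, heq⟩ := oracle_step hn hG hI hF
      have hzle : c.z ≤ 4 * n - 2 := by
        by_contra hcon
        exact hF (final_of_big_z hn hI (by omega))
      have hzne : c.z ≠ 4 * n - 2 := by
        intro he
        exact hF (final_of_big_z hn hI (by omega))
      obtain ⟨c', h1, hfin, h3⟩ := ih (doAct c a) (by rw [doAct_z]; omega)
        (inv_step hI hA)
      exact ⟨c', Relation.ReflTransGen.head ⟨a, hA, rfl⟩ h1, hfin, by rw [h3, heq]⟩

lemma tstar_mem_Dset {n : ℕ} (hn : 1 ≤ n) {tG : Finset (N × ℕ × ℕ)}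
    (hG : IsGold n tG) {c : Config N} (hI : Inv n c) :
    tstar tG c ∈ Dset n c := by
  obtain ⟨c', h1, h2, h3⟩ := oracle_run hn hG (4 * n - 2 - c.z) c le_rfl hI
  exact ⟨c', h1, h2, h3⟩

lemma f1_eq {tG t' : Finset (N × ℕ × ℕ)} (h : t' ∩ tG ≠ ∅) :
    f1 tG t' = 2 * ((t' ∩ tG).card : ℝ) / ((tG.card : ℝ) + (t'.card : ℝ)) := by
  have hh : 1 ≤ (t' ∩ tG).card := Finset.card_pos.2 (Finset.nonempty_iff_ne_empty.2 h)
  have hG : 1 ≤ tG.card :=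
    le_trans hh (Finset.card_le_card Finset.inter_subset_right)
  have hP : 1 ≤ t'.card :=
    le_trans hh (Finset.card_le_card Finset.inter_subset_left)
  have hhR : (0 : ℝ) < ((t' ∩ tG).card : ℝ) := by exact_mod_cast hh
  have hGR : (0 : ℝ) < (tG.card : ℝ) := by exact_mod_cast hG
  have hPR : (0 : ℝ) < (t'.card : ℝ) := by exact_mod_cast hP
  rw [f1, if_neg h]
  field_simp
  ring

lemma f1_le_one (tG t' : Finset (N × ℕ × ℕ)) : f1 tG t' ≤ 1 := by
  by_cases h : t' ∩ tG = ∅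
  · rw [f1, if_pos h]; norm_num
  · rw [f1_eq h]
    have h1 : (t' ∩ tG).card ≤ tG.card := Finset.card_le_card Finset.inter_subset_right
    have h2 : (t' ∩ tG).card ≤ t'.card := Finset.card_le_card Finset.inter_subset_left
    have h3 : 1 ≤ (t' ∩ tG).card := Finset.card_pos.2 (Finset.nonempty_iff_ne_empty.2 h)
    have key : 2 * (t' ∩ tG).card ≤ tG.card + t'.card := by omega
    have hpos : (0 : ℝ) < (tG.card : ℝ) + (t'.card : ℝ) := by
      have : 1 ≤ tG.card + t'.card := by omega
      push_cast
      exact_mod_cast Nat.lt_of_lt_of_le Nat.zero_lt_one this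
    rw [div_le_one hpos]
    exact_mod_cast key

lemma f1_lt_f1 {tG A B : Finset (N × ℕ × ℕ)} (h1 : A ∩ tG ⊆ B ∩ tG)
    (h2 : B \ tG ⊆ A \ tG) (hne : A ≠ B) (hB : (B ∩ tG).Nonempty) :
    f1 tG A < f1 tG B := by
  have hBne : B ∩ tG ≠ ∅ := Finset.nonempty_iff_ne_empty.1 hB
  have hhB : 1 ≤ (B ∩ tG).card := Finset.card_pos.2 hB
  have hGc : 1 ≤ tG.card :=
    le_trans hhB (Finset.card_le_card Finset.inter_subset_right)
  have hcB : (B ∩ tG).card + (B \ tG).card = B.card := Finset.card_inter_add_card_sdiff B tG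
  have hcA : (A ∩ tG).card + (A \ tG).card = A.card := Finset.card_inter_add_card_sdiff A tG
  have hfB : f1 tG B = 2 * ((B ∩ tG).card : ℝ) / ((tG.card : ℝ) + (B.card : ℝ)) :=
    f1_eq hBne
  by_cases hA : A ∩ tG = ∅
  · rw [f1, if_pos hA, hfB]
    have hBR : (0 : ℝ) < ((B ∩ tG).card : ℝ) := by exact_mod_cast hhB
    have hGR : (0 : ℝ) < (tG.card : ℝ) := by exact_mod_cast hGc
    have hBcR : (0 : ℝ) ≤ (B.card : ℝ) := Nat.cast_nonneg _
    apply div_pos (by linarith) (by linarith)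
  · rw [f1_eq hA, hfB]
    have hhA : 1 ≤ (A ∩ tG).card := Finset.card_pos.2 (Finset.nonempty_iff_ne_empty.2 hA)
    have hle1 : (A ∩ tG).card ≤ (B ∩ tG).card := Finset.card_le_card h1
    have hle2 : (B \ tG).card ≤ (A \ tG).card := Finset.card_le_card h2
    have hstrict : (A ∩ tG).card < (B ∩ tG).card ∨ (B \ tG).card < (A \ tG).card := by
      by_contra hcon
      push_neg at hcon
      have e1 : A ∩ tG = B ∩ tG :=
        Finset.eq_of_subset_of_card_le h1 (by omega)
      have e2 : B \ tG = A \ tG :=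
        Finset.eq_of_subset_of_card_le h2 (by omega)
      apply hne
      have eA : A ∩ tG ∪ A \ tG = A := by
        ext x; simp only [Finset.mem_union, Finset.mem_inter, Finset.mem_sdiff]; tauto
      have eB : B ∩ tG ∪ B \ tG = B := by
        ext x; simp only [Finset.mem_union, Finset.mem_inter, Finset.mem_sdiff]; tauto
      rw [← eA, ← eB, e1, e2]
    have key : 2 * (A ∩ tG).card * (tG.card + B.card) <
        2 * (B ∩ tG).card * (tG.card + A.card) := by
      rcases hstrict with h | h <;> nlinarith [hcA, hcB, hle1, hle2, hhA, hhB, hGc]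
    have p1 : (0 : ℝ) < (tG.card : ℝ) + (A.card : ℝ) := by
      have : 1 ≤ tG.card + A.card := by omega
      exact_mod_cast Nat.lt_of_lt_of_le Nat.zero_lt_one this
    have p2 : (0 : ℝ) < (tG.card : ℝ) + (B.card : ℝ) := by
      have : 1 ≤ tG.card + B.card := by omega
      exact_mod_cast Nat.lt_of_lt_of_le Nat.zero_lt_one this
    rw [div_lt_div_iff₀ p1 p2]
    exact_mod_cast key

end Proof5
/-- Corollary 1: `t*(c)` is the unique maximizer of `F1` over `D(c)`:
any other reachable tree has strictly smaller `F1` than `F1(c)`. -/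
theorem tstar_unique_max (n : ℕ) (hn : 1 ≤ n) (tG : Finset (N × ℕ × ℕ))
    (hG : IsGold n tG) (c : Config N) (hc : Valid n c)
    (t' : Finset (N × ℕ × ℕ)) (ht' : t' ∈ Dset n c) (hne : t' ≠ tstar tG c) :
    f1 tG t' < configF1 n tG c := by
  have hI : Inv n c := valid_inv hc
  have hmem : tstar tG c ∈ Dset n c := tstar_mem_Dset hn hG hI
  obtain ⟨c', hr', hf', ht'eq⟩ := ht'
  subst ht'eq
  obtain ⟨hSr, htsub⟩ := Sset_reaches hG hr' hI
  have hsub : c'.t ∩ tG ⊆ tstar tG c ∩ tG := by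
    rw [← Sset_eq_tstar_inter]
    exact fun x hx => hSr (Finset.mem_union_left _ hx)
  have hdiff : tstar tG c \ tG ⊆ c'.t \ tG := by
    intro x hx
    rw [Finset.mem_sdiff] at hx ⊢
    obtain ⟨hx1, hx2⟩ := hx
    rcases Finset.mem_union.1 hx1 with h | h
    · exact ⟨htsub h, hx2⟩
    · exact absurd (reach_subset tG c h) hx2
  have hBne : (tstar tG c ∩ tG).Nonempty := by
    by_cases hF : Final n c
    · exfalso
      have hceq : c' = c := reaches_final_eq hF hr'
      apply hne
      rw [hceq, tstar, reach_final hn hG hF, Finset.union_empty]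
    · obtain ⟨Xr, hXr⟩ := hG.root
      exact ⟨(Xr, 0, n), Finset.mem_inter.2
        ⟨Finset.mem_union_right _ (root_mem_reach hI hF hXr), hXr⟩⟩
  have hlt : f1 tG c'.t < f1 tG (tstar tG c) := f1_lt_f1 hsub hdiff hne hBne
  have hbdd : BddAbove (f1 tG '' Dset n c) := by
    refine ⟨1, fun x hx => ?_⟩
    obtain ⟨t'', -, rfl⟩ := hx
    exact f1_le_one _ _
  have hle : f1 tG (tstar tG c) ≤ configF1 n tG c :=
    le_csSup hbdd ⟨tstar tG c, hmem, rfl⟩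
  linarith

end SpanParser
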